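/- Let ρ₀ and ρ₁ be the qutrit density matrices of the pure states |ψ_b⟩ = (1/√2)(|b⟩ + |?⟩) for b = 0, 1, where |0⟩, |1⟩, |?⟩ are orthonormal. With equal priors, the optimal probability of distinguishing ρ₀ from ρ₁, namely (1/2)(1 + (1/2)tr|ρ₀ − ρ₁|), equals (1/2)(1 + √3/2), which is strictly greater than 3/4. -/

import Mathlib

open Matrix Finset

/-- The qutrit state `|ψ_b⟩ = (1/√2)(|b⟩ + |?⟩)`, where `|0⟩, |1⟩, |?⟩` are the
standard basis vectors of `ℂ³` (with `|?⟩` the third basis vector). -/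
noncomputable def otPsi (b : Fin 2) : Fin 3 → ℂ := fun i =>
  if i = 2 then ((1 / Real.sqrt 2 : ℝ) : ℂ)
  else if (i : ℕ) = (b : ℕ) then ((1 / Real.sqrt 2 : ℝ) : ℂ) else 0

/-- The density matrix `ρ_b = |ψ_b⟩⟨ψ_b|`. -/
noncomputable def otRho (b : Fin 2) : Matrix (Fin 3) (Fin 3) ℂ :=
  Matrix.vecMulVec (otPsi b) (star (otPsi b))

lemma trace_eq_sum_eig {n : Type*} [Fintype n] [DecidableEq n]
    {A : Matrix n n ℂ} (hA : A.IsHermitian) :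
    A.trace = ∑ i, (hA.eigenvalues i : ℂ) := by
  conv_lhs => rw [hA.spectral_theorem]
  rw [Unitary.conjStarAlgAut_apply]
  rw [trace_mul_cycle]
  rw [(Matrix.mem_unitaryGroup_iff').mp (hA.eigenvectorUnitary).2]
  simp [trace_diagonal]

lemma trace_sq_eq_sum_eig {n : Type*} [Fintype n] [DecidableEq n]
    {A : Matrix n n ℂ} (hA : A.IsHermitian) :
    (A * A).trace = ∑ i, ((hA.eigenvalues i : ℂ))^2 := by
  conv_lhs => rw [hA.spectral_theorem]
  rw [Unitary.conjStarAlgAut_apply]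
  rw [show ((hA.eigenvectorUnitary : Matrix n n ℂ) * diagonal (RCLike.ofReal ∘ hA.eigenvalues)
      * star (hA.eigenvectorUnitary : Matrix n n ℂ)) *
      ((hA.eigenvectorUnitary : Matrix n n ℂ) * diagonal (RCLike.ofReal ∘ hA.eigenvalues)
      * star (hA.eigenvectorUnitary : Matrix n n ℂ)) =
      (hA.eigenvectorUnitary : Matrix n n ℂ) * (diagonal (RCLike.ofReal ∘ hA.eigenvalues) *
      ((star (hA.eigenvectorUnitary : Matrix n n ℂ)) * (hA.eigenvectorUnitary : Matrix n n ℂ)) *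
      diagonal (RCLike.ofReal ∘ hA.eigenvalues))
      * star (hA.eigenvectorUnitary : Matrix n n ℂ) by noncomm_ring]
  rw [(Matrix.mem_unitaryGroup_iff').mp (hA.eigenvectorUnitary).2, mul_one]
  rw [trace_mul_cycle, (Matrix.mem_unitaryGroup_iff').mp (hA.eigenvectorUnitary).2, one_mul,
    diagonal_mul_diagonal, trace_diagonal]
  simp [sq]

lemma otD_eq : otRho 0 - otRho 1 =
    !![1/2, 0, 1/2; 0, -(1/2), -(1/2); 1/2, -(1/2), 0] := by
  have h2 : ((Real.sqrt 2 : ℝ) : ℂ)⁻¹ * ((Real.sqrt 2 : ℝ) : ℂ)⁻¹ = 1/2 := by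
    rw [← mul_inv, ← Complex.ofReal_mul, Real.mul_self_sqrt (by norm_num)]
    norm_num
  ext i j
  fin_cases i <;> fin_cases j <;>
    simp [otRho, otPsi, vecMulVec_apply, Pi.star_apply, Fin.ext_iff] <;>
    simp [h2, vecHead, vecTail]

lemma ot_sum_abs_eig (h : (otRho 0 - otRho 1).IsHermitian) :
    ∑ i, |h.eigenvalues i| = Real.sqrt 3 := by
  have htr : ∑ i, (h.eigenvalues i : ℂ) = 0 := by
    rw [← trace_eq_sum_eig h, otD_eq, trace_fin_three_of]
    norm_num
  have hdet : ∏ i, (RCLike.ofReal (h.eigenvalues i) : ℂ) = 0 := by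
    rw [← h.det_eq_prod_eigenvalues]
    have : (otRho 0 - otRho 1).det = (!![1/2, 0, 1/2; 0, -(1/2), -(1/2); 1/2, -(1/2), 0] :
        Matrix (Fin 3) (Fin 3) ℂ).det := by rw [otD_eq]
    rw [this, Matrix.det_fin_three]
    norm_num [vecHead, vecTail]
    simp [Matrix.cons_val_two, vecHead, vecTail]
  have hsq : ∑ i, ((h.eigenvalues i : ℂ))^2 = 3/2 := by
    rw [← trace_sq_eq_sum_eig h, otD_eq, Matrix.mul_fin_three, trace_fin_three_of]
    norm_num
  set μ := h.eigenvalues with hμ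
  have htr' : μ 0 + μ 1 + μ 2 = 0 := by
    rw [Fin.sum_univ_three] at htr
    exact_mod_cast htr
  have hdet' : μ 0 * μ 1 * μ 2 = 0 := by
    rw [Fin.prod_univ_three] at hdet
    have : ((μ 0 * μ 1 * μ 2 : ℝ) : ℂ) = 0 := by push_cast; exact hdet
    exact RCLike.ofReal_eq_zero.mp this
  have hsq' : μ 0 ^ 2 + μ 1 ^ 2 + μ 2 ^ 2 = 3/2 := by
    rw [Fin.sum_univ_three] at hsq
    have : ((μ 0 ^ 2 + μ 1 ^ 2 + μ 2 ^ 2 : ℝ) : ℂ) = ((3/2 : ℝ) : ℂ) := by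
      push_cast
      convert hsq using 2
    exact_mod_cast this
  rw [Fin.sum_univ_three]
  have sqrt34 : (2:ℝ) * Real.sqrt (3/4) = Real.sqrt 3 := by
    rw [show (3:ℝ) = 4 * (3/4) by norm_num, Real.sqrt_mul (by norm_num : (0:ℝ) ≤ 4),
      show Real.sqrt 4 = 2 by rw [show (4:ℝ) = 2^2 by norm_num, Real.sqrt_sq (by norm_num)]]
    norm_num
  have key : ∀ a b : ℝ, a + b = 0 → a ^ 2 + b ^ 2 = 3/2 → |a| + |b| = Real.sqrt 3 := by
    intro a b hab hsq2
    have hb : b = -a := by linarith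
    subst hb
    have ha2 : a ^ 2 = 3/4 := by nlinarith
    rw [abs_neg, ← Real.sqrt_sq_eq_abs, ha2, ← sqrt34]
    ring
  rcases mul_eq_zero.mp hdet' with h12 | h2
  · rcases mul_eq_zero.mp h12 with h0 | h1
    · rw [h0, abs_zero]
      have := key (μ 1) (μ 2) (by rw [h0] at htr'; linarith) (by rw [h0] at hsq'; nlinarith)
      linarith
    · rw [h1, abs_zero]
      have := key (μ 0) (μ 2) (by rw [h1] at htr'; linarith) (by rw [h1] at hsq'; nlinarith)
      linarith
  · rw [h2, abs_zero]
    have := key (μ 0) (μ 1) (by rw [h2] at htr'; linarith) (by rw [h2] at hsq'; nlinarith)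
    linarith

/-- The optimal probability of distinguishing the oblivious-transfer states
`ρ₀, ρ₁` with equal priors, `(1/2)(1 + (1/2)tr|ρ₀ − ρ₁|)`, equals
`(1/2)(1 + √3/2)`, which is strictly greater than `3/4`. -/
theorem ot_attack_probability
    (h : (otRho 0 - otRho 1).IsHermitian) :
    (1 / 2) * (1 + (1 / 2) * ∑ i, |h.eigenvalues i|)
        = (1 / 2) * (1 + Real.sqrt 3 / 2) ∧
      (3 / 4 : ℝ) < (1 / 2) * (1 + (1 / 2) * ∑ i, |h.eigenvalues i|) := by
  rw [ot_sum_abs_eig h]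
  constructor
  · ring
  · have h3 : (1:ℝ) < Real.sqrt 3 := by
      rw [show (1:ℝ) = Real.sqrt 1 by simp]
      exact Real.sqrt_lt_sqrt (by norm_num) (by norm_num)
    nlinarith
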